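/- Let M₁ and M₂ be R-modules and N₁ a proper submodule of M₁. Then N₁ × M₂ is a weakly classical 1-absorbing prime submodule of the R-module M₁ × M₂ if and only if N₁ is a weakly classical 1-absorbing prime submodule of M₁ and, for every classical 1-quadruple-zero (a, b, c, m) of N₁ with a, b, c nonunits of R and m ∈ M₁, one has abc ∈ Ann_R(M₂). -/
import Mathlib


/-- A proper submodule `N` of `M` is weakly classical 1-absorbing prime if whenever
`abcm ∈ N` and `abcm ≠ 0` for nonunits `a, b, c ∈ R` and `m ∈ M`, then `abm ∈ N` or `cm ∈ N`. -/
def IsWeaklyClassical1AbsorbingPrime {R : Type*} [CommRing R] {M : Type*} [AddCommGroup M]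
    [Module R M] (N : Submodule R M) : Prop :=
  N ≠ ⊤ ∧ ∀ a b c : R, ∀ m : M, ¬ IsUnit a → ¬ IsUnit b → ¬ IsUnit c →
    (a * b * c) • m ∈ N → (a * b * c) • m ≠ 0 → ((a * b) • m ∈ N ∨ c • m ∈ N)

/-- A proper ideal `I` of `R` is weakly 1-absorbing prime if whenever `abc ∈ I` and
`abc ≠ 0` for nonunits `a, b, c ∈ R`, then `ab ∈ I` or `c ∈ I`. -/
def IsWeakly1AbsorbingPrimeIdeal {R : Type*} [CommRing R] (I : Ideal R) : Prop :=
  I ≠ ⊤ ∧ ∀ a b c : R, ¬ IsUnit a → ¬ IsUnit b → ¬ IsUnit c →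
    a * b * c ∈ I → a * b * c ≠ 0 → (a * b ∈ I ∨ c ∈ I)

/-- For nonunits `a, b, c ∈ R` and `m ∈ M`, the tuple `(a, b, c, m)` is a classical
1-quadruple-zero of `N` if `abcm = 0`, `abm ∉ N` and `cm ∉ N`. -/
def IsClassical1QuadrupleZero {R : Type*} [CommRing R] {M : Type*} [AddCommGroup M]
    [Module R M] (N : Submodule R M) (a b c : R) (m : M) : Prop :=
  ¬ IsUnit a ∧ ¬ IsUnit b ∧ ¬ IsUnit c ∧ (a * b * c) • m = 0 ∧
    (a * b) • m ∉ N ∧ c • m ∉ N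

/-- `N₁ × M₂` is weakly classical 1-absorbing prime in `M₁ × M₂` iff `N₁`
is weakly classical 1-absorbing prime in `M₁` and every classical 1-quadruple-zero
`(a, b, c, m)` of `N₁` satisfies `abc ∈ Ann_R(M₂)`. -/
theorem stmt_16 {R : Type*} [CommRing R] [Nontrivial R] {M₁ M₂ : Type*} [AddCommGroup M₁]
    [Module R M₁] [Nontrivial M₁] [AddCommGroup M₂] [Module R M₂] [Nontrivial M₂]
    (N₁ : Submodule R M₁) (hN₁ : N₁ ≠ ⊤) :
    IsWeaklyClassical1AbsorbingPrime (N₁.prod (⊤ : Submodule R M₂)) ↔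
      (IsWeaklyClassical1AbsorbingPrime N₁ ∧
        ∀ (a b c : R) (m : M₁), IsClassical1QuadrupleZero N₁ a b c m →
          ∀ n : M₂, (a * b * c) • n = 0) := by
  constructor
  · rintro ⟨-, h⟩
    constructor
    · refine ⟨hN₁, fun a b c m ha hb hc hmem hne => ?_⟩
      have := h a b c (m, 0) ha hb hc (by simpa using hmem)
        (by simp [Prod.smul_def, Prod.ext_iff]; exact hne)
      simpa using this
    · rintro a b c m ⟨ha, hb, hc, hzero, hab, hcm⟩ n
      by_contra hne
      have := h a b c (m, n) ha hb hc (by simp [Prod.smul_def, hzero])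
        (by simp [Prod.smul_def, Prod.ext_iff]; intro _; exact hne)
      rcases this with h1 | h1
      · exact hab (by simpa [Prod.smul_def] using h1.1)
      · exact hcm (by simpa [Prod.smul_def] using h1.1)
  · rintro ⟨⟨-, h⟩, hq⟩
    constructor
    · intro htop
      exact hN₁ (by ext x; simpa using (Submodule.eq_top_iff'.mp htop ⟨x, 0⟩).1)
    · rintro a b c ⟨m, n⟩ ha hb hc hmem hne
      have hm : (a * b * c) • m ∈ N₁ := by simpa using hmem
      by_cases hz : (a * b * c) • m = 0
      · by_cases hab : (a * b) • m ∈ N₁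
        · exact Or.inl (by simp [Prod.smul_def, hab])
        by_cases hcm : c • m ∈ N₁
        · exact Or.inr (by simp [Prod.smul_def, hcm])
        have := hq a b c m ⟨ha, hb, hc, hz, hab, hcm⟩ n
        exact absurd (by simp [Prod.smul_def, Prod.ext_iff, hz, this]) hne
      · rcases h a b c m ha hb hc hm hz with h1 | h1
        · exact Or.inl (by simp [Prod.smul_def, h1])
        · exact Or.inr (by simp [Prod.smul_def, h1])
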